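/- The matrix G = [[2+3z, 3z, 4+4z], [4+2z, 1+3z, 2z]] over F_5[z] is right invertible (it has a polynomial right inverse), its complexity, i.e., the maximal degree of its 2×2 minors, equals 2, and the free distance of the convolutional code it generates equals 5: wt(uG) ≥ 5 for every nonzero u ∈ F_5[z]^2, and equality is attained. Since S(3,2,2) = (3-2)(⌊2/2⌋+1)+2+1 = 5, this code is a (3,2,2;1)_5 MDS convolutional code. -/
import Mathlib


open Polynomial Matrix

/-- The weight of a vector of polynomials: the total number of nonzero coefficients
occurring in its polynomial entries. -/
instance : Fact (Nat.Prime 5) := ⟨by norm_num⟩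

/-- weight -/
def polyWt {F : Type*} [Field F] {n : ℕ} (v : Fin n → Polynomial F) : ℕ :=
  ∑ j, (v j).support.card

/-! ### Auxiliary definitions and lemmas -/

/-- Weight of a vector over `F₅`. -/
def wtF (w : Fin 3 → ZMod 5) : ℕ := (Finset.univ.filter fun j => w j ≠ 0).card

/-- The contribution of the constant part `G₀` of `G = G₀ + G₁ z`. -/
def sl0 (a b : ZMod 5) : Fin 3 → ZMod 5 := ![2*a+4*b, b, 4*a]

/-- The contribution of the linear part `G₁` of `G = G₀ + G₁ z`. -/
def sl1 (a b : ZMod 5) : Fin 3 → ZMod 5 := ![3*a+2*b, 3*a+3*b, 4*a+2*b]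

lemma L1 : ∀ a b c d : ZMod 5, ¬(a = 0 ∧ b = 0) →
    3 ≤ wtF (sl0 a b) + wtF (fun j => sl0 c d j + sl1 a b j) := by decide

lemma L2' : ∀ a b : ZMod 5, ¬(a = 0 ∧ b = 0) →
    2 ≤ wtF (fun j => sl0 0 0 j + sl1 a b j) := by decide

lemma L3' : ∀ a b : ZMod 5, ¬(a = 0 ∧ b = 0) →
    5 ≤ wtF (sl0 a b) + wtF (fun j => sl0 0 0 j + sl1 a b j) := by decide

lemma slices_le (v : Fin 3 → Polynomial (ZMod 5)) (S : Finset ℕ) :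
    ∑ k ∈ S, wtF (fun j => (v j).coeff k) ≤ polyWt v := by
  have h1 : ∀ j : Fin 3, (S.filter fun k => (v j).coeff k ≠ 0).card ≤ (v j).support.card := by
    intro j
    apply Finset.card_le_card
    intro k hk
    simp only [Finset.mem_filter] at hk
    exact mem_support_iff.mpr hk.2
  calc ∑ k ∈ S, wtF (fun j => (v j).coeff k)
      = ∑ k ∈ S, ∑ j : Fin 3, if (v j).coeff k ≠ 0 then 1 else 0 := by
        simp [wtF, Finset.card_filter]
    _ = ∑ j : Fin 3, ∑ k ∈ S, if (v j).coeff k ≠ 0 then 1 else 0 := Finset.sum_comm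
    _ = ∑ j : Fin 3, (S.filter fun k => (v j).coeff k ≠ 0).card := by
        simp [Finset.card_filter]
    _ ≤ ∑ j : Fin 3, (v j).support.card := Finset.sum_le_sum fun j _ => h1 j
    _ = polyWt v := rfl

lemma card_support_X_mul (f : Polynomial (ZMod 5)) :
    (X * f).support.card = f.support.card := by
  have h : (X * f).support = f.support.map ⟨(· + 1), add_left_injective 1⟩ := by
    ext a
    cases a with
    | zero => simp [mem_support_iff, coeff_mul_X_zero]
    | succ n => simp [mem_support_iff, coeff_X_mul]
  rw [h, Finset.card_map]

/-- The codeword `(p, q) · G` written out explicitly. -/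
noncomputable def Vv (p q : Polynomial (ZMod 5)) : Fin 3 → Polynomial (ZMod 5) :=
  ![(2+3*X)*p + (4+2*X)*q, 3*X*p + (1+3*X)*q, (4+4*X)*p + 2*X*q]

lemma Vv_coeff_zero (p q : Polynomial (ZMod 5)) (j : Fin 3) :
    (Vv p q j).coeff 0 = sl0 (p.coeff 0) (q.coeff 0) j := by
  fin_cases j <;> (simp [Vv, sl0, mul_coeff_zero, coeff_add]; try ring)

lemma Vv_coeff_succ (p q : Polynomial (ZMod 5)) (k : ℕ) (j : Fin 3) :
    (Vv p q j).coeff (k+1)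
      = sl0 (p.coeff (k+1)) (q.coeff (k+1)) j + sl1 (p.coeff k) (q.coeff k) j := by
  fin_cases j
  · simp only [Vv, Matrix.cons_val_zero, sl0, sl1]
    rw [show (2+3*X)*p + (4+2*X)*q = 2*p + 3*(X*p) + (4*q + 2*(X*q)) from by ring]
    simp [coeff_X_mul]
    ring
  · simp only [Vv, Matrix.cons_val_one, Matrix.head_cons, sl0, sl1]
    rw [show 3*X*p + (1+3*X)*q = 3*(X*p) + (q + 3*(X*q)) from by ring]
    simp [coeff_X_mul]
    ring
  · simp only [Vv, Matrix.cons_val_two, Matrix.tail_cons, Matrix.head_cons, sl0, sl1]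
    rw [show (4+4*X)*p + 2*X*q = 4*p + 4*(X*p) + 2*(X*q) from by ring]
    simp [coeff_X_mul]
    ring

/-- Key lemma: every nonzero codeword has weight at least 5. -/
lemma key (n : ℕ) : ∀ p q : Polynomial (ZMod 5), p.natDegree + q.natDegree ≤ n →
    ¬(p = 0 ∧ q = 0) → 5 ≤ polyWt (Vv p q) := by
  induction n using Nat.strong_induction_on with
  | _ n ih =>
  intro p q hn hpq
  by_cases h0 : p.coeff 0 = 0 ∧ q.coeff 0 = 0
  · -- both divisible by X: divide out
    obtain ⟨p', hp'⟩ := X_dvd_iff.mpr h0.1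
    obtain ⟨q', hq'⟩ := X_dvd_iff.mpr h0.2
    have hne : ¬(p' = 0 ∧ q' = 0) := by
      rintro ⟨rfl, rfl⟩
      exact hpq ⟨by simp [hp'], by simp [hq']⟩
    have hv : ∀ j, Vv p q j = X * Vv p' q' j := by
      intro j
      rw [hp', hq']
      fin_cases j <;> (simp [Vv]; ring)
    have hwt : polyWt (Vv p q) = polyWt (Vv p' q') := by
      unfold polyWt
      exact Finset.sum_congr rfl fun j _ => by rw [hv j, card_support_X_mul]
    rw [hwt]
    have hle : ∀ f : Polynomial (ZMod 5), f.natDegree ≤ (X * f).natDegree := by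
      intro f
      by_cases hf : f = 0
      · simp [hf]
      · rw [natDegree_X_mul hf]; omega
    have hlt : p'.natDegree + q'.natDegree < n := by
      rcases (not_and_or.mp hne) with h | h
      · have h1 : p'.natDegree + 1 = p.natDegree := by rw [hp', natDegree_X_mul h]
        have h2 : q'.natDegree ≤ q.natDegree := hq' ▸ hle q'
        omega
      · have h1 : q'.natDegree + 1 = q.natDegree := by rw [hq', natDegree_X_mul h]
        have h2 : p'.natDegree ≤ p.natDegree := hp' ▸ hle p'
        omega
    exact ih _ hlt p' q' le_rfl hne
  · -- constant slice nonzero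
    set m := max p.natDegree q.natDegree with hm
    have e0 : (fun j => (Vv p q j).coeff 0) = sl0 (p.coeff 0) (q.coeff 0) :=
      funext (Vv_coeff_zero p q)
    by_cases hm0 : m = 0
    · -- constant case: slices 0 and 1
      have hS := slices_le (Vv p q) {0, 1}
      rw [Finset.sum_pair (by norm_num : (0:ℕ) ≠ 1)] at hS
      have hpm : p.natDegree ≤ m := le_max_left _ _
      have hqm : q.natDegree ≤ m := le_max_right _ _
      have hp1 : p.coeff 1 = 0 := coeff_eq_zero_of_natDegree_lt (by omega)
      have hq1 : q.coeff 1 = 0 := coeff_eq_zero_of_natDegree_lt (by omega)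
      have e1 : (fun j => (Vv p q j).coeff 1) =
          (fun j => sl0 0 0 j + sl1 (p.coeff 0) (q.coeff 0) j) := by
        funext j
        rw [show (1:ℕ) = 0 + 1 from rfl, Vv_coeff_succ, hp1, hq1]
      rw [e0, e1] at hS
      exact le_trans (L3' _ _ h0) hS
    · -- m ≥ 1 : slices 0, 1, m+1
      have hpm : p.natDegree ≤ m := le_max_left _ _
      have hqm : q.natDegree ≤ m := le_max_right _ _
      have hS := slices_le (Vv p q) {0, 1, m+1}
      rw [show ({0, 1, m+1} : Finset ℕ) = insert 0 (insert 1 {m+1}) from rfl,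
        Finset.sum_insert (by simp), Finset.sum_insert (by simp; omega),
        Finset.sum_singleton] at hS
      -- top slice
      have hpm1 : p.coeff (m+1) = 0 := coeff_eq_zero_of_natDegree_lt (by omega)
      have hqm1 : q.coeff (m+1) = 0 := coeff_eq_zero_of_natDegree_lt (by omega)
      have etop : (fun j => (Vv p q j).coeff (m+1)) =
          (fun j => sl0 0 0 j + sl1 (p.coeff m) (q.coeff m) j) := by
        funext j
        rw [Vv_coeff_succ, hpm1, hqm1]
      have e1 : (fun j => (Vv p q j).coeff 1) =
          (fun j => sl0 (p.coeff 1) (q.coeff 1) j + sl1 (p.coeff 0) (q.coeff 0) j) := by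
        funext j
        rw [show (1:ℕ) = 0 + 1 from rfl, Vv_coeff_succ]
      have hmne : ¬(p.coeff m = 0 ∧ q.coeff m = 0) := by
        rintro ⟨hc1, hc2⟩
        rcases max_choice p.natDegree q.natDegree with h | h
        · have hm' : m = p.natDegree := hm.trans h
          have hl : p.leadingCoeff = 0 := by
            show p.coeff p.natDegree = 0
            rwa [← hm']
          have hp0 := leadingCoeff_eq_zero.mp hl
          exact hm0 (by rw [hm', hp0, natDegree_zero])
        · have hm' : m = q.natDegree := hm.trans h
          have hl : q.leadingCoeff = 0 := by
            show q.coeff q.natDegree = 0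
            rwa [← hm']
          have hq0 := leadingCoeff_eq_zero.mp hl
          exact hm0 (by rw [hm', hq0, natDegree_zero])
      rw [e0, e1, etop] at hS
      have h1 := L1 (p.coeff 0) (q.coeff 0) (p.coeff 1) (q.coeff 1) h0
      have h2 := L2' (p.coeff m) (q.coeff m) hmne
      omega

/-- The matrix `G = [[2+3z, 3z, 4+4z], [4+2z, 1+3z, 2z]]` over `F₅[z]` is right
invertible, its complexity (the maximal degree of its `2×2` minors) equals `2`, and
the free distance of the convolutional code it generates equals `5`:
`wt(uG) ≥ 5` for every nonzero `u ∈ F₅[z]²` and equality is attained.  Since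
`S(3,2,2) = (3-2)(⌊2/2⌋+1)+2+1 = 5`, this is a `(3,2,2;1)₅` MDS convolutional code. -/
theorem example_32215_mds_code
    (G : Matrix (Fin 2) (Fin 3) (Polynomial (ZMod 5)))
    (hG : G = !![2 + 3 * X, 3 * X, 4 + 4 * X; 4 + 2 * X, 1 + 3 * X, 2 * X]) :
    (∃ H : Matrix (Fin 3) (Fin 2) (Polynomial (ZMod 5)), G * H = 1) ∧
    (Finset.univ.sup fun f : Fin 2 ↪ Fin 3 =>
      ((G.submatrix id ⇑f).det).natDegree) = 2 ∧
    IsLeast {w : ℕ | ∃ u : Fin 2 → Polynomial (ZMod 5),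
      u ≠ 0 ∧ w = polyWt (Matrix.vecMul u G)} 5 ∧
    ((3 - 2) * (2 / 2 + 1) + 2 + 1 : ℕ) = 5 := by
  have hvec : ∀ u : Fin 2 → Polynomial (ZMod 5), Matrix.vecMul u G = Vv (u 0) (u 1) := by
    intro u
    funext j
    fin_cases j <;>
      simp [hG, Matrix.vecMul, dotProduct, Fin.sum_univ_two, Vv] <;> ring
  refine ⟨?_, ?_, ⟨?_, ?_⟩, by norm_num⟩
  · -- right invertibility
    refine ⟨!![1 + 4*X, 3; 1 + 2*X, 4; 1 + 3*X, 1], ?_⟩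
    subst hG
    rw [← Matrix.ext_iff]
    intro i j
    fin_cases i <;> fin_cases j <;>
      · simp [Matrix.mul_apply, Fin.sum_univ_three, Matrix.one_apply]
        ring_nf
        reduce_mod_char
  · -- complexity = 2
    subst hG
    apply le_antisymm
    · refine Finset.sup_le fun f _ => ?_
      rw [Matrix.det_fin_two]
      have hdeg : ∀ (i : Fin 2) (j : Fin 3),
          ((!![2 + 3 * X, 3 * X, 4 + 4 * X; 4 + 2 * X, 1 + 3 * X, 2 * X] :
            Matrix (Fin 2) (Fin 3) (Polynomial (ZMod 5))) i j).natDegree ≤ 1 := by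
        intro i j
        fin_cases i <;> fin_cases j <;> simp <;> compute_degree
      refine le_trans (natDegree_sub_le _ _) (max_le ?_ ?_) <;>
        · refine le_trans (natDegree_mul_le) ?_
          simp only [Matrix.submatrix_apply, id_eq]
          have := hdeg 0 (f 0)
          have := hdeg 0 (f 1)
          have := hdeg 1 (f 0)
          have := hdeg 1 (f 1)
          omega
    · have he : Function.Injective (![0, 1] : Fin 2 → Fin 3) := by decide
      refine le_trans ?_ (Finset.le_sup (Finset.mem_univ ⟨![0, 1], he⟩))
      rw [Matrix.det_fin_two]
      simp only [Matrix.submatrix_apply, id_eq, Function.Embedding.coeFn_mk]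
      have h2 : (((2 + 3*X) * (1 + 3*X) - 3*X*(4 + 2*X) : Polynomial (ZMod 5))).natDegree = 2 := by
        compute_degree!
      simp only [Matrix.cons_val_zero, Matrix.cons_val_one, Matrix.head_cons,
        Matrix.head_fin_const]
      exact h2.ge
  · -- 5 is attained: take u = (1, 0)
    refine ⟨![1, 0], ?_, ?_⟩
    · intro h
      have := congrFun h 0
      simp at this
    · rw [hvec]
      have h1 : (2 + 3*X : Polynomial (ZMod 5)).support.card = 2 := by
        rw [show (2 + 3*X : Polynomial (ZMod 5)) = C 2 * X ^ 0 + C 3 * X ^ 1 from by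
          simp [map_ofNat]]
        exact card_support_binomial (by norm_num) (by decide) (by decide)
      have h2 : (3*X : Polynomial (ZMod 5)).support.card = 1 := by
        rw [show (3*X : Polynomial (ZMod 5)) = C 3 * X from by simp [map_ofNat]]
        rw [support_C_mul_X (by decide)]
        rfl
      have h3 : (4 + 4*X : Polynomial (ZMod 5)).support.card = 2 := by
        rw [show (4 + 4*X : Polynomial (ZMod 5)) = C 4 * X ^ 0 + C 4 * X ^ 1 from by
          simp [map_ofNat]]
        exact card_support_binomial (by norm_num) (by decide) (by decide)
      have e : Vv (![1, 0] 0) (![1, 0] 1) = ![2 + 3*X, 3*X, 4 + 4*X] := by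
        funext j; fin_cases j <;> (simp [Vv]; try ring)
      rw [e]
      simp [polyWt, Fin.sum_univ_three, h1, h2, h3]
  · -- 5 is a lower bound
    rintro w ⟨u, hu, rfl⟩
    rw [hvec]
    have hne : ¬(u 0 = 0 ∧ u 1 = 0) := by
      rintro ⟨h0, h1⟩
      apply hu
      funext i
      fin_cases i
      · exact h0
      · exact h1
    exact key ((u 0).natDegree + (u 1).natDegree) (u 0) (u 1) le_rfl hne
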